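/- Let X, T, Z, Y be random variables taking values in finite alphabets such that Z and Y are conditionally independent given the pair (X,T). Then there exists a probability space carrying random variables (X', T', Z', Y') with the same joint distribution as (X, T, Z, Y), a random variable W uniformly distributed on the interval [0,1] that is independent of the triple (X', T', Z'), and a measurable function φ such that Y' = φ(X', T', W) almost surely. -/

import Mathlib

open MeasureTheory ProbabilityTheory


lemma exists_rep_fin (n : ℕ) (hn : 0 < n) (r : Fin n → ℝ) (hr : ∀ j, 0 ≤ r j)
    (hsum : ∑ j, r j = 1) :
    ∃ ψ : ℝ → Fin n, Measurable ψ ∧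
      ∀ j, volume (ψ ⁻¹' {j} ∩ Set.Icc 0 1) = ENNReal.ofReal (r j) := by
  classical
  set g : ℕ → ℝ := fun k => if h : k < n then r ⟨k, h⟩ else 0 with hg
  have hg0 : ∀ k, 0 ≤ g k := by
    intro k; simp only [hg]; split <;> [exact hr _; exact le_rfl]
  set S : ℕ → ℝ := fun k => ∑ i ∈ Finset.range k, g i with hS
  have hSsucc : ∀ k, S (k + 1) = S k + g k := fun k => Finset.sum_range_succ g k
  have hSmono : Monotone S := by
    intro a b hab
    exact Finset.sum_le_sum_of_subset_of_nonneg (Finset.range_subset_range.2 hab)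
      (fun i _ _ => hg0 i)
  have hS0 : ∀ k, 0 ≤ S k := fun k => Finset.sum_nonneg fun i _ => hg0 i
  have hSn : S n = 1 := by
    have := Fin.sum_univ_eq_sum_range g n
    have h2 : ∀ j : Fin n, g j.1 = r j := by
      intro j; simp [hg, j.isLt]
    rw [hS]
    simp only []
    rw [← this, Finset.sum_congr rfl fun j _ => h2 j, hsum]
  have hex : ∀ w : ℝ, w < 1 → ∃ k, w < S (k + 1) := by
    intro w hw
    exact ⟨n - 1, by rwa [Nat.sub_add_cancel hn, hSn]⟩
  have hfindlt : ∀ (w : ℝ) (hw : w < 1), Nat.find (hex w hw) < n := by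
    intro w hw
    have : Nat.find (hex w hw) ≤ n - 1 :=
      Nat.find_le (by rwa [Nat.sub_add_cancel hn, hSn])
    exact lt_of_le_of_lt this (Nat.sub_lt hn one_pos)
  set ψ : ℝ → Fin n := fun w =>
    if hw : w < 1 then ⟨Nat.find (hex w hw), hfindlt w hw⟩ else ⟨n - 1, Nat.sub_lt hn one_pos⟩
    with hψ
  have hchar : ∀ (w : ℝ) (hw : w < 1) (j : Fin n),
      ψ w = j ↔ (w < S (j.1 + 1) ∧ ∀ m < j.1, S (m + 1) ≤ w) := by
    intro w hw j
    simp only [hψ, dif_pos hw, Fin.ext_iff]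
    rw [Nat.find_eq_iff]
    simp only [not_lt]
  have hpre : ∀ j : Fin n, ψ ⁻¹' {j} ∩ Set.Ico 0 1 = Set.Ico (S j.1) (S (j.1 + 1)) := by
    intro j
    ext w
    simp only [Set.mem_inter_iff, Set.mem_preimage, Set.mem_singleton_iff, Set.mem_Ico]
    constructor
    · rintro ⟨hj, h0, h1⟩
      obtain ⟨hlt, hge⟩ := (hchar w h1 j).1 hj
      refine ⟨?_, hlt⟩
      rcases Nat.eq_zero_or_pos j.1 with h | h
      · simpa [h, hS] using h0
      · have := hge (j.1 - 1) (Nat.sub_lt h one_pos)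
        rwa [Nat.sub_add_cancel (Nat.one_le_iff_ne_zero.2 (Nat.pos_iff_ne_zero.1 h))] at this
    · rintro ⟨h1, h2⟩
      have hw0 : 0 ≤ w := le_trans (hS0 _) h1
      have hw1 : w < 1 := lt_of_lt_of_le h2 (by rw [← hSn]; exact hSmono j.isLt)
      refine ⟨(hchar w hw1 j).2 ⟨h2, fun m hm => ?_⟩, hw0, hw1⟩
      exact le_trans (hSmono (Nat.succ_le_of_lt hm)) h1
  have hmeas : Measurable ψ := by
    apply measurable_to_countable'
    intro j
    have : ψ ⁻¹' {j} =
        (Set.Iio 1 ∩ Set.Iio (S (j.1 + 1)) ∩ ⋂ (m : ℕ) (_ : m < j.1), Set.Ici (S (m + 1))) ∪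
        (Set.Ici 1 ∩ if j.1 = n - 1 then Set.univ else ∅) := by
      ext w
      by_cases hw : w < 1
      · simp only [Set.mem_preimage, Set.mem_singleton_iff, Set.mem_union, Set.mem_inter_iff,
          Set.mem_Iio, Set.mem_Ici, Set.mem_iInter, hchar w hw j, hw, true_and, not_le.2 hw,
          false_and, or_false]
      · have : ψ w = ⟨n - 1, Nat.sub_lt hn one_pos⟩ := by simp [hψ, hw]
        simp only [Set.mem_preimage, Set.mem_singleton_iff, this, Set.mem_union, Set.mem_inter_iff,
          Set.mem_Iio, hw, false_and, false_or, Set.mem_Ici, not_lt.1 hw, true_and, Fin.ext_iff]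
        constructor
        · intro h; simp [← h]
        · intro h; split_ifs at h with h' ; · exact h'.symm
          · exact absurd h (Set.notMem_empty w)
    rw [this]
    refine MeasurableSet.union ?_ ?_
    · exact ((measurableSet_Iio.inter measurableSet_Iio).inter
        (MeasurableSet.iInter fun m => MeasurableSet.iInter fun _ => measurableSet_Ici))
    · exact measurableSet_Ici.inter (by split <;> simp)
  refine ⟨ψ, hmeas, fun j => ?_⟩
  have hIcc : volume (ψ ⁻¹' {j} ∩ Set.Icc 0 1) = volume (ψ ⁻¹' {j} ∩ Set.Ico 0 1) := by
    apply le_antisymm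
    · calc volume (ψ ⁻¹' {j} ∩ Set.Icc 0 1)
          ≤ volume ((ψ ⁻¹' {j} ∩ Set.Ico 0 1) ∪ {1}) := by
            apply measure_mono
            rintro w ⟨hw, h0, h1⟩
            rcases lt_or_eq_of_le h1 with h | h
            · exact Or.inl ⟨hw, h0, h⟩
            · exact Or.inr (by simp [h])
      _ ≤ volume (ψ ⁻¹' {j} ∩ Set.Ico 0 1) + volume ({1} : Set ℝ) := measure_union_le _ _
      _ = volume (ψ ⁻¹' {j} ∩ Set.Ico 0 1) := by simp
    · exact measure_mono (Set.inter_subset_inter_right _ Set.Ico_subset_Icc_self)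
  rw [hIcc, hpre j, Real.volume_Ico, hSsucc]
  congr 1
  have : g j.1 = r j := by simp [hg, j.isLt]
  rw [← this]; ring

lemma measurable_of_countable_dom {D E : Type*} [MeasurableSpace D]
    [MeasurableSingletonClass D] [Countable D] [MeasurableSpace E] (f : D → E) :
    Measurable f := fun _ _ => (Set.to_countable _).measurableSet

lemma exists_rep {δ : Type*} [Fintype δ] [Nonempty δ] [MeasurableSpace δ]
    [MeasurableSingletonClass δ] (r : δ → ℝ) (hr : ∀ y, 0 ≤ r y) (hsum : ∑ y, r y = 1) :
    ∃ ψ : ℝ → δ, Measurable ψ ∧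
      ∀ y, volume (ψ ⁻¹' {y} ∩ Set.Icc 0 1) = ENNReal.ofReal (r y) := by
  classical
  set e := Fintype.equivFin δ with he
  obtain ⟨ψ₀, hm, hv⟩ := exists_rep_fin (Fintype.card δ) Fintype.card_pos
    (r ∘ e.symm) (fun j => hr _)
    (by rw [Function.comp_def, Equiv.sum_comp e.symm r]; exact hsum)
  have hpre : ∀ y : δ, (fun w => e.symm (ψ₀ w)) ⁻¹' {y} = ψ₀ ⁻¹' {e y} := by
    intro y; ext w
    simp only [Set.mem_preimage, Set.mem_singleton_iff, Equiv.symm_apply_eq]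
  refine ⟨fun w => e.symm (ψ₀ w), ?_, fun y => ?_⟩
  · apply measurable_to_countable'
    intro y
    rw [hpre]
    exact hm (measurableSet_singleton _)
  · rw [hpre, hv]
    simp

/-- Let `X, T, Z, Y` be random variables on a probability space taking
values in finite alphabets, with `Z` and `Y` conditionally independent given `(X, T)`.
Then there is a probability space carrying `(X', T', Z', Y')` with the same joint
distribution as `(X, T, Z, Y)`, a random variable `W` uniform on `[0,1]` and independent
of `(X', T', Z')`, and a measurable function `φ` with `Y' = φ(X', T', W)` a.s. -/
theorem functional_representation_uniform
    {Ω : Type*} [MeasurableSpace Ω] (μ : Measure Ω) [IsProbabilityMeasure μ]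
    {α β γ δ : Type*}
    [Fintype α] [MeasurableSpace α] [MeasurableSingletonClass α]
    [Fintype β] [MeasurableSpace β] [MeasurableSingletonClass β]
    [Fintype γ] [MeasurableSpace γ] [MeasurableSingletonClass γ]
    [Fintype δ] [MeasurableSpace δ] [MeasurableSingletonClass δ]
    (X : Ω → α) (T : Ω → β) (Z : Ω → γ) (Y : Ω → δ)
    (hX : Measurable X) (hT : Measurable T) (hZ : Measurable Z) (hY : Measurable Y)
    -- `Z ⫫ Y | (X,T)` :
    (hCI : ∀ (z : γ) (y : δ) (x : α) (t : β),
      μ {ω | Z ω = z ∧ Y ω = y ∧ X ω = x ∧ T ω = t} * μ {ω | X ω = x ∧ T ω = t} =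
        μ {ω | Z ω = z ∧ X ω = x ∧ T ω = t} * μ {ω | Y ω = y ∧ X ω = x ∧ T ω = t}) :
    ∃ (Ω' : Type) (_ : MeasurableSpace Ω') (μ' : Measure Ω'),
      IsProbabilityMeasure μ' ∧
      ∃ (X' : Ω' → α) (T' : Ω' → β) (Z' : Ω' → γ) (Y' : Ω' → δ) (W : Ω' → ℝ),
        Measurable X' ∧ Measurable T' ∧ Measurable Z' ∧ Measurable Y' ∧ Measurable W ∧
        -- same joint distribution:
        μ'.map (fun ω => (X' ω, T' ω, Z' ω, Y' ω)) =
          μ.map (fun ω => (X ω, T ω, Z ω, Y ω)) ∧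
        -- `W` is uniform on `[0,1]`:
        μ'.map W = volume.restrict (Set.Icc (0 : ℝ) 1) ∧
        -- `W` is independent of `(X', T', Z')`:
        IndepFun W (fun ω => (X' ω, T' ω, Z' ω)) μ' ∧
        -- functional representation:
        ∃ φ : α × β × ℝ → δ, Measurable φ ∧
          ∀ᵐ ω ∂μ', Y' ω = φ (X' ω, T' ω, W ω) := by
  classical
  have hΩne : Nonempty Ω := by
    by_contra h
    rw [not_nonempty_iff] at h
    have h1 := measure_univ (μ := μ)
    rw [Set.univ_eq_empty_iff.2 h] at h1
    simp at h1
  haveI hδne : Nonempty δ := ⟨Y (Classical.arbitrary Ω)⟩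
  set ν : Measure ℝ := volume.restrict (Set.Icc 0 1) with hν
  haveI : IsProbabilityMeasure ν := by
    constructor
    rw [hν, Measure.restrict_apply_univ, Real.volume_Icc]
    norm_num
  have mXT : ∀ (x : α) (t : β), MeasurableSet {ω | X ω = x ∧ T ω = t} := fun x t =>
    (hX (measurableSet_singleton x)).inter (hT (measurableSet_singleton t))
  have mYXT : ∀ (y : δ) (x : α) (t : β),
      MeasurableSet {ω | Y ω = y ∧ X ω = x ∧ T ω = t} := fun y x t =>
    (hY (measurableSet_singleton y)).inter (mXT x t)
  set r : α → β → δ → ℝ := fun x t y =>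
    if μ {ω | X ω = x ∧ T ω = t} = 0 then (Fintype.card δ : ℝ)⁻¹
    else (μ {ω | Y ω = y ∧ X ω = x ∧ T ω = t} / μ {ω | X ω = x ∧ T ω = t}).toReal with hrdef
  have hr0 : ∀ x t y, 0 ≤ r x t y := by
    intro x t y
    simp only [hrdef]
    split
    · positivity
    · exact ENNReal.toReal_nonneg
  have hsplit : ∀ (x : α) (t : β),
      μ {ω | X ω = x ∧ T ω = t} = ∑ y : δ, μ {ω | Y ω = y ∧ X ω = x ∧ T ω = t} := by
    intro x t
    have hU : {ω | X ω = x ∧ T ω = t} = ⋃ y : δ, {ω | Y ω = y ∧ X ω = x ∧ T ω = t} := by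
      ext ω
      simp only [Set.mem_setOf_eq, Set.mem_iUnion]
      exact ⟨fun h => ⟨Y ω, rfl, h⟩, fun ⟨y, _, h⟩ => h⟩
    have hdisj : Pairwise (Function.onFun Disjoint
        fun y : δ => {ω | Y ω = y ∧ X ω = x ∧ T ω = t}) := by
      intro y y' hne
      refine Set.disjoint_left.2 fun ω h1 h2 => hne ?_
      rw [← h1.1, ← h2.1]
    rw [hU, measure_iUnion hdisj (fun y => mYXT y x t), tsum_fintype]
  have hr1 : ∀ x t, ∑ y, r x t y = 1 := by
    intro x t
    by_cases hc : μ {ω | X ω = x ∧ T ω = t} = 0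
    · simp only [hrdef, if_pos hc, Finset.sum_const, Finset.card_univ, nsmul_eq_mul]
      rw [mul_inv_cancel₀]
      exact_mod_cast Fintype.card_ne_zero
    · simp only [hrdef, if_neg hc]
      have hterm : ∀ y ∈ Finset.univ, (μ {ω | Y ω = y ∧ X ω = x ∧ T ω = t} /
          μ {ω | X ω = x ∧ T ω = t}) ≠ ⊤ := fun y _ =>
        (ENNReal.div_lt_top (measure_ne_top μ _) hc).ne
      rw [← ENNReal.toReal_sum hterm]
      simp only [div_eq_mul_inv, ← Finset.sum_mul]
      rw [← hsplit x t, ENNReal.mul_inv_cancel hc (measure_ne_top μ _), ENNReal.toReal_one]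
  have hψex : ∀ (x : α) (t : β), ∃ ψ : ℝ → δ, Measurable ψ ∧
      ∀ y, volume (ψ ⁻¹' {y} ∩ Set.Icc 0 1) = ENNReal.ofReal (r x t y) :=
    fun x t => exists_rep (r x t) (hr0 x t) (hr1 x t)
  choose ψ hψm hψv using hψex
  -- the base space, living in `Type 0`
  set eα := Fintype.equivFin α with heα
  set eβ := Fintype.equivFin β with heβ
  set eγ := Fintype.equivFin γ with heγ
  set K : Type := Fin (Fintype.card α) × Fin (Fintype.card β) × Fin (Fintype.card γ) with hK
  have hKmeas : ∀ s : Set K, MeasurableSet s := fun s => (Set.to_countable s).measurableSet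
  set g : Ω → K := fun ω => (eα (X ω), eβ (T ω), eγ (Z ω)) with hg
  have hgm : Measurable g := by
    refine Measurable.prodMk ?_ (Measurable.prodMk ?_ ?_)
    · apply measurable_to_countable'
      intro j
      have : (fun ω => eα (X ω)) ⁻¹' {j} = X ⁻¹' {eα.symm j} := by
        ext ω
        simp [Equiv.eq_symm_apply]
      rw [this]
      exact hX (measurableSet_singleton _)
    · apply measurable_to_countable'
      intro j
      have : (fun ω => eβ (T ω)) ⁻¹' {j} = T ⁻¹' {eβ.symm j} := by
        ext ω
        simp [Equiv.eq_symm_apply]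
      rw [this]
      exact hT (measurableSet_singleton _)
    · apply measurable_to_countable'
      intro j
      have : (fun ω => eγ (Z ω)) ⁻¹' {j} = Z ⁻¹' {eγ.symm j} := by
        ext ω
        simp [Equiv.eq_symm_apply]
      rw [this]
      exact hZ (measurableSet_singleton _)
  set μ₀ : Measure K := μ.map g with hμ₀
  haveI : IsProbabilityMeasure μ₀ := Measure.isProbabilityMeasure_map hgm.aemeasurable
  -- the new random variables
  set X' : K × ℝ → α := fun p => eα.symm p.1.1 with hX'def
  set T' : K × ℝ → β := fun p => eβ.symm p.1.2.1 with hT'def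
  set Z' : K × ℝ → γ := fun p => eγ.symm p.1.2.2 with hZ'def
  set Y' : K × ℝ → δ := fun p => ψ (X' p) (T' p) p.2 with hY'def
  have hφ : Measurable (fun q : α × β × ℝ => ψ q.1 q.2.1 q.2.2) := by
    apply measurable_to_countable'
    intro y
    have hset : (fun q : α × β × ℝ => ψ q.1 q.2.1 q.2.2) ⁻¹' {y} =
        ⋃ (x : α), ⋃ (t : β), {x} ×ˢ ({t} ×ˢ (ψ x t ⁻¹' {y})) := by
      ext q
      simp only [Set.mem_preimage, Set.mem_singleton_iff, Set.mem_iUnion, Set.mem_prod]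
      constructor
      · intro h; exact ⟨q.1, q.2.1, rfl, rfl, h⟩
      · rintro ⟨x, t, hx, ht, h⟩; rw [hx, ht]; exact h
    rw [hset]
    exact MeasurableSet.iUnion fun x => MeasurableSet.iUnion fun t =>
      (measurableSet_singleton x).prod ((measurableSet_singleton t).prod
        (hψm x t (measurableSet_singleton y)))
  have hX'm : Measurable X' := by
    rw [hX'def]
    exact (measurable_of_countable_dom (⇑eα.symm)).comp
      (measurable_fst : Measurable (Prod.fst : K × ℝ → K)).fst
  have hT'm : Measurable T' := by
    rw [hT'def]
    exact (measurable_of_countable_dom (⇑eβ.symm)).comp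
      ((measurable_fst : Measurable (Prod.fst : K × ℝ → K)).snd).fst
  have hZ'm : Measurable Z' := by
    rw [hZ'def]
    exact (measurable_of_countable_dom (⇑eγ.symm)).comp
      ((measurable_fst : Measurable (Prod.fst : K × ℝ → K)).snd).snd
  have hY'm : Measurable Y' :=
    hφ.comp (hX'm.prodMk (hT'm.prodMk measurable_snd))
  refine ⟨K × ℝ, inferInstance, μ₀.prod ν, inferInstance,
    X', T', Z', Y', Prod.snd,
    hX'm, hT'm, hZ'm, hY'm, measurable_snd, ?_, ?_, ?_,
    ⟨fun q => ψ q.1 q.2.1 q.2.2, hφ, Filter.Eventually.of_forall fun p => rfl⟩⟩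
  · -- same joint distribution
    have hF : Measurable (fun p : K × ℝ => (X' p, T' p, Z' p, Y' p)) :=
      hX'm.prodMk (hT'm.prodMk (hZ'm.prodMk hY'm))
    have hG : Measurable (fun ω => (X ω, T ω, Z ω, Y ω)) :=
      hX.prodMk (hT.prodMk (hZ.prodMk hY))
    apply Measure.ext_of_singleton
    rintro ⟨x, t, z, y⟩
    rw [Measure.map_apply hF (measurableSet_singleton _),
      Measure.map_apply hG (measurableSet_singleton _)]
    have hpre : (fun p : K × ℝ => (X' p, T' p, Z' p, Y' p)) ⁻¹' {(x, t, z, y)} =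
        ({((eα x, eβ t, eγ z) : K)} : Set K) ×ˢ (ψ x t ⁻¹' {y}) := by
      ext p
      rw [Set.mem_preimage, Set.mem_singleton_iff, Set.mem_prod, Set.mem_singleton_iff,
        Set.mem_preimage, Set.mem_singleton_iff]
      simp only [hX'def, hT'def, hZ'def, hY'def, Prod.ext_iff, Equiv.symm_apply_eq]
      constructor
      · rintro ⟨h1, h2, h3, h4⟩
        rw [h1, h2] at h4
        simp only [Equiv.symm_apply_apply] at h4
        refine ⟨?_, h4⟩
        have hp : p.1 = ((p.1.1, p.1.2.1, p.1.2.2) : K) := rfl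
        rw [hp, h1, h2, h3]
      · rintro ⟨h1, h4⟩
        have ha : p.1.1 = eα x := by rw [h1]
        have hb : p.1.2.1 = eβ t := by rw [h1]
        have hc' : p.1.2.2 = eγ z := by rw [h1]
        refine ⟨ha, hb, hc', ?_⟩
        rw [ha, hb]
        simpa using h4
    have hGpre : (fun ω => (X ω, T ω, Z ω, Y ω)) ⁻¹' {(x, t, z, y)} =
        {ω | X ω = x ∧ T ω = t ∧ Z ω = z ∧ Y ω = y} := by
      ext ω
      simp only [Set.mem_preimage, Set.mem_singleton_iff, Prod.mk.injEq, Set.mem_setOf_eq]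
    have hsing : μ₀ ({((eα x, eβ t, eγ z) : K)} : Set K) =
        μ {ω | X ω = x ∧ T ω = t ∧ Z ω = z} := by
      rw [hμ₀, Measure.map_apply hgm (measurableSet_singleton _)]
      congr 1
      ext ω
      simp only [hg, Set.mem_preimage, Set.mem_singleton_iff, Set.mem_setOf_eq]
      constructor
      · intro h
        exact ⟨eα.injective (congrArg (fun k : K => k.1) h),
          eβ.injective (congrArg (fun k : K => k.2.1) h),
          eγ.injective (congrArg (fun k : K => k.2.2) h)⟩
      · rintro ⟨h1, h2, h3⟩
        rw [h1, h2, h3]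
    rw [hpre, hGpre, Measure.prod_prod, hsing]
    rw [hν, Measure.restrict_apply (hψm x t (measurableSet_singleton y)), hψv x t y]
    by_cases hc : μ {ω | X ω = x ∧ T ω = t} = 0
    · have hA : μ {ω | X ω = x ∧ T ω = t ∧ Z ω = z} = 0 :=
        measure_mono_null (Set.setOf_subset_setOf.2 fun ω h => ⟨h.1, h.2.1⟩) hc
      have hB : μ {ω | X ω = x ∧ T ω = t ∧ Z ω = z ∧ Y ω = y} = 0 :=
        measure_mono_null (Set.setOf_subset_setOf.2 fun ω h => ⟨h.1, h.2.1⟩) hc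
      rw [hA, hB, zero_mul]
    · have hfin : μ {ω | X ω = x ∧ T ω = t} ≠ ⊤ := measure_ne_top μ _
      have hrval : ENNReal.ofReal (r x t y) =
          μ {ω | Y ω = y ∧ X ω = x ∧ T ω = t} / μ {ω | X ω = x ∧ T ω = t} := by
        simp only [hrdef, if_neg hc]
        exact ENNReal.ofReal_toReal (ENNReal.div_lt_top (measure_ne_top μ _) hc).ne
      rw [hrval]
      have e1 : {ω | Z ω = z ∧ Y ω = y ∧ X ω = x ∧ T ω = t} =
          {ω | X ω = x ∧ T ω = t ∧ Z ω = z ∧ Y ω = y} := by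
        ext ω; simp only [Set.mem_setOf_eq]; tauto
      have e2 : {ω | Z ω = z ∧ X ω = x ∧ T ω = t} =
          {ω | X ω = x ∧ T ω = t ∧ Z ω = z} := by
        ext ω; simp only [Set.mem_setOf_eq]; tauto
      have hCI' := hCI z y x t
      rw [e1, e2] at hCI'
      rw [← mul_div_assoc, ← hCI',
        mul_comm (μ {ω | X ω = x ∧ T ω = t ∧ Z ω = z ∧ Y ω = y}), mul_div_assoc]
      exact ENNReal.mul_div_cancel hc hfin
  · -- W uniform
    rw [Measure.map_snd_prod, measure_univ, one_smul]
  · -- independence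
    rw [indepFun_iff_measure_inter_preimage_eq_mul]
    intro s t' hs ht'
    have h1 : Prod.snd ⁻¹' s ∩ (fun p : K × ℝ => (X' p, T' p, Z' p)) ⁻¹' t' =
        ((fun k : K => (eα.symm k.1, eβ.symm k.2.1, eγ.symm k.2.2)) ⁻¹' t') ×ˢ s := by
      ext p
      simp only [hX'def, hT'def, hZ'def, Set.mem_inter_iff, Set.mem_preimage, Set.mem_prod]
      tauto
    have h2 : (Prod.snd : K × ℝ → ℝ) ⁻¹' s = (Set.univ : Set K) ×ˢ s := by
      ext p; simp
    have h3 : (fun p : K × ℝ => (X' p, T' p, Z' p)) ⁻¹' t' =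
        ((fun k : K => (eα.symm k.1, eβ.symm k.2.1, eγ.symm k.2.2)) ⁻¹' t') ×ˢ
          (Set.univ : Set ℝ) := by
      ext p; simp [hX'def, hT'def, hZ'def]
    rw [h1, h2, h3, Measure.prod_prod, Measure.prod_prod, Measure.prod_prod]
    simp [measure_univ, mul_comm]
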